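/- Under the list-experiment model with misreporting (Assumptions 1 and 2), consecutive differences of the observed treatment-group distribution are free of the uniform misreporting terms: for every j with 2 ≤ j ≤ J, P₁(j) − P₁(j−1) = ((1−p₁)/(1−p₀))·(δ·(P₀(j−1) − P₀(j−2)) + (1−δ)·(P₀(j) − P₀(j−1))). -/

import Mathlib

theorem list_experiment_consecutive_differences
    (J : ℕ) (hJ : 1 ≤ J)
    (P : ℤ → ℝ)
    (hPzero : ∀ j : ℤ, j < 0 ∨ (J : ℤ) < j → P j = 0)
    (hPnonneg : ∀ j : ℤ, 0 ≤ P j)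
    (hPsum : ∑ j ∈ Finset.Icc (0 : ℤ) (J : ℤ), P j = 1)
    (δ p₀ p₁ : ℝ)
    (hδ : 0 ≤ δ ∧ δ ≤ 1) (hp₀ : 0 ≤ p₀ ∧ p₀ < 1) (hp₁ : 0 ≤ p₁ ∧ p₁ < 1)
    (P₀ P₁ : ℤ → ℝ)
    (hP₀ : ∀ j : ℤ, 0 ≤ j → j ≤ (J : ℤ) →
      P₀ j = (1 - p₀) * P j + p₀ / ((J : ℝ) + 1))
    (hP₁ : ∀ j : ℤ, 0 ≤ j → j ≤ (J : ℤ) + 1 →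
      P₁ j = (1 - p₁) * (δ * P (j - 1) + (1 - δ) * P j) + p₁ / ((J : ℝ) + 2)) :
    ∀ j : ℤ, 2 ≤ j → j ≤ (J : ℤ) →
      P₁ j - P₁ (j - 1) = (1 - p₁) / (1 - p₀) *
        (δ * (P₀ (j - 1) - P₀ (j - 2)) + (1 - δ) * (P₀ j - P₀ (j - 1))) := by
  intro j h2 hJj
  have h0 : (1 - p₀) ≠ 0 := by linarith [hp₀.2]
  rw [hP₁ j (by linarith) (by linarith), hP₁ (j-1) (by linarith) (by linarith),
      hP₀ j (by linarith) hJj, hP₀ (j-1) (by linarith) (by linarith),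
      hP₀ (j-2) (by linarith) (by linarith)]
  field_simp
  ring
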